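/- Let (Ω, ℱ, P) be a probability space, p ≥ 2 an integer, and 0 ≤ α ≤ 1. Let A_1, …, A_p be mutually independent events all having the same probability. For each integer r with 2 ≤ r ≤ p and each pair 1 ≤ j < k ≤ p, let B_{jk,r} be an event with P(B_{jk,r}) ≤ 2α/(r(r−1)) such that B_{jk,r} is independent of the σ-algebra generated by A_1, …, A_p. Define R(ω) = #{ j : ω ∈ A_j }. Then P( ⋃_{1 ≤ j < k ≤ p} ( A_j ∩ A_k ∩ { ω : R(ω) ≥ 2 and ω ∈ B_{jk,R(ω)} } ) ) ≤ α. -/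

import Mathlib

open scoped Classical

open MeasureTheory ProbabilityTheory

/-- Counting lemma: the number of ordered pairs `(j,k)` with `j < k` both in `F`
is at most `F.card * (F.card - 1) / 2` (stated multiplied by 2). -/
lemma two_mul_card_lt_pairs_le {n : ℕ} (F : Finset (Fin n)) :
    2 * ((F ×ˢ F).filter (fun q => q.1 < q.2)).card ≤ F.card * (F.card - 1) := by
  classical
  set L := (F ×ˢ F).filter (fun q => q.1 < q.2) with hL
  set G := (F ×ˢ F).filter (fun q => q.2 < q.1) with hG
  have hGL : G = L.image Prod.swap := by
    ext q
    simp only [hL, hG, Finset.mem_image, Finset.mem_filter, Finset.mem_product]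
    constructor
    · rintro ⟨⟨h1, h2⟩, h3⟩
      exact ⟨q.swap, ⟨⟨h2, h1⟩, h3⟩, q.swap_swap⟩
    · rintro ⟨a, ⟨⟨h1, h2⟩, h3⟩, rfl⟩
      exact ⟨⟨h2, h1⟩, h3⟩
  have hcard : G.card = L.card := by
    rw [hGL]
    exact Finset.card_image_of_injective _ Prod.swap_injective
  have hdisj : Disjoint L G := by
    rw [Finset.disjoint_left]
    intro q hq hq'
    simp only [hL, hG, Finset.mem_filter] at hq hq'
    exact absurd hq'.2 (not_lt_of_gt hq.2)
  have hsub : L ∪ G ⊆ F.offDiag := by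
    intro q hq
    rcases Finset.mem_union.mp hq with h | h <;>
      simp only [hL, hG, Finset.mem_filter, Finset.mem_product] at h <;>
      simp only [Finset.mem_offDiag]
    · exact ⟨h.1.1, h.1.2, ne_of_lt h.2⟩
    · exact ⟨h.1.1, h.1.2, (ne_of_lt h.2).symm⟩
  have h1 : L.card + G.card ≤ F.offDiag.card := by
    rw [← Finset.card_union_of_disjoint hdisj]
    exact Finset.card_le_card hsub
  have h2 : F.offDiag.card = F.card * (F.card - 1) := by
    rw [Finset.offDiag_card]
    have := Nat.mul_pred F.card F.card
    simpa [Nat.pred_eq_sub_one] using this.symm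
  omega

/-- FWER control of the two-stage testing procedure (Appendix C).
`A j` is the event that covariate `j` passes the screening stage (mutually
independent, all with the same probability), `R ω` is the number of selected
covariates, and `B j k r` is the second-stage rejection event for the pair
`(j,k)` when `r` covariates were selected, with Bonferroni level
`2α/(r(r−1))` and independent of the σ-algebra generated by the `A j`'s.
The probability of at least one second-stage rejection is at most `α`. -/
theorem stmt2 {Ω : Type*} [MeasurableSpace Ω] (P : Measure Ω) [IsProbabilityMeasure P]
    (p : ℕ) (hp : 2 ≤ p) (α : ℝ) (hα0 : 0 ≤ α) (hα1 : α ≤ 1)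
    (A : Fin p → Set Ω) (hAmeas : ∀ j, MeasurableSet (A j))
    (hAindep : iIndepSet A P)
    (hAsame : ∀ j k, P (A j) = P (A k))
    (B : Fin p → Fin p → ℕ → Set Ω)
    (hBmeas : ∀ j k r, MeasurableSet (B j k r))
    (hBprob : ∀ (j k : Fin p), j < k → ∀ r : ℕ, 2 ≤ r → r ≤ p →
      P (B j k r) ≤ ENNReal.ofReal (2 * α / (r * (r - 1))))
    (hBindep : ∀ (j k : Fin p), j < k → ∀ r : ℕ, 2 ≤ r → r ≤ p →
      Indep (MeasurableSpace.generateFrom (Set.range A))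
        (MeasurableSpace.generateFrom {B j k r}) P)
    (R : Ω → ℕ) (hR : ∀ ω, R ω = (Finset.univ.filter (fun j => ω ∈ A j)).card) :
    P (⋃ (j : Fin p) (k : Fin p) (_ : j < k),
        A j ∩ A k ∩ {ω | 2 ≤ R ω ∧ ω ∈ B j k (R ω)}) ≤ ENNReal.ofReal α := by
  classical
  rename_i instΩ instP
  -- the selected set
  let F : Ω → Finset (Fin p) := fun ω => Finset.univ.filter (fun j => ω ∈ A j)
  have hFdef : ∀ ω, F ω = Finset.univ.filter (fun j => ω ∈ A j) := fun _ => rfl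
  have hm_le : MeasurableSpace.generateFrom (Set.range A) ≤ instΩ := by
    apply MeasurableSpace.generateFrom_le
    rintro _ ⟨j, rfl⟩
    exact hAmeas j
  have hAm : ∀ j, MeasurableSet[MeasurableSpace.generateFrom (Set.range A)] (A j) := fun j =>
    MeasurableSpace.measurableSet_generateFrom ⟨j, rfl⟩
  -- measurability of {R = r} w.r.t. m
  have hRm : ∀ r : ℕ,
      MeasurableSet[MeasurableSpace.generateFrom (Set.range A)] {ω | R ω = r} := by
    intro r
    have hset : {ω | R ω = r} =
        ⋃ S ∈ {S : Finset (Fin p) | S.card = r},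
          ⋂ j, (if j ∈ S then A j else (A j)ᶜ) := by
      ext ω
      simp only [Set.mem_setOf_eq, Set.mem_iUnion, Set.mem_iInter, hR]
      constructor
      · intro h
        refine ⟨F ω, h, fun j => ?_⟩
        by_cases hj : ω ∈ A j
        · simp [hFdef, hj]
        · simp [hFdef, hj]
      · rintro ⟨S, hS, hmem⟩
        have hFS : F ω = S := by
          ext j
          have := hmem j
          by_cases hj : j ∈ S
          · simp only [hj, if_true] at this
            simp [hFdef, hj, this]
          · simp only [hj, if_false] at this
            simp only [Set.mem_compl_iff] at this
            simp [hFdef, hj, this]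
        rw [hFdef] at hFS
        rw [hFS, hS]
    rw [hset]
    refine MeasurableSet.biUnion (Set.to_countable _) (fun S _ => ?_)
    refine MeasurableSet.iInter (fun j => ?_)
    by_cases hj : j ∈ S
    · simpa [hj] using hAm j
    · simpa [hj] using (hAm j).compl
  -- the per-(r,pair) events
  set Pairs : Finset (Fin p × Fin p) := Finset.univ.filter (fun q => q.1 < q.2) with hPairs
  set s : ℕ → Fin p × Fin p → Set Ω :=
    fun r q => A q.1 ∩ A q.2 ∩ {ω | R ω = r} with hs
  have hsm : ∀ r q, MeasurableSet[MeasurableSpace.generateFrom (Set.range A)] (s r q) :=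
    fun r q => ((hAm q.1).inter (hAm q.2)).inter (hRm r)
  have hsmeas : ∀ r q, MeasurableSet (s r q) := fun r q => hm_le _ (hsm r q)
  -- Step 1: the union is contained in the layered union
  have hsubset : (⋃ (j : Fin p) (k : Fin p) (_ : j < k),
        A j ∩ A k ∩ {ω | 2 ≤ R ω ∧ ω ∈ B j k (R ω)}) ⊆
      ⋃ r ∈ Finset.Icc 2 p, ⋃ q ∈ Pairs, (s r q ∩ B q.1 q.2 r) := by
    intro ω hω
    simp only [Set.mem_iUnion] at hω ⊢
    obtain ⟨j, k, hjk, ⟨⟨hj, hk⟩, h2, hB⟩⟩ := hω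
    have hRle : R ω ≤ p := by
      rw [hR]
      calc (Finset.univ.filter (fun j => ω ∈ A j)).card
          ≤ Finset.univ.card := Finset.card_filter_le _ _
        _ = p := by simp
    refine ⟨R ω, Finset.mem_Icc.mpr ⟨h2, hRle⟩, (j, k), ?_, ⟨⟨hj, hk⟩, rfl⟩, hB⟩
    simp [hPairs, hjk]
  -- Step 3 core: per-slice bound
  have hslice : ∀ r ∈ Finset.Icc 2 p,
      (∑ q ∈ Pairs, P (s r q ∩ B q.1 q.2 r)) ≤
        ENNReal.ofReal α * P {ω | R ω = r} := by
    intro r hr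
    obtain ⟨hr2, hrp⟩ := Finset.mem_Icc.mp hr
    set c : ENNReal := ENNReal.ofReal (2 * α / (r * ((r : ℝ) - 1))) with hc
    -- factor independence
    have hfac : ∀ q ∈ Pairs, P (s r q ∩ B q.1 q.2 r) ≤ P (s r q) * c := by
      intro q hq
      have hqlt : q.1 < q.2 := by
        simpa [hPairs] using hq
      have hind := (Indep_iff _ _ P).mp (hBindep q.1 q.2 hqlt r hr2 hrp)
      have hBgen : MeasurableSet[MeasurableSpace.generateFrom {B q.1 q.2 r}]
          (B q.1 q.2 r) := MeasurableSpace.measurableSet_generateFrom rfl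
      rw [hind (s r q) (B q.1 q.2 r) (hsm r q) hBgen]
      exact mul_le_mul' le_rfl (hBprob q.1 q.2 hqlt r hr2 hrp)
    calc (∑ q ∈ Pairs, P (s r q ∩ B q.1 q.2 r))
        ≤ ∑ q ∈ Pairs, P (s r q) * c := Finset.sum_le_sum hfac
      _ = (∑ q ∈ Pairs, P (s r q)) * c := (Finset.sum_mul _ _ _).symm
      _ ≤ ENNReal.ofReal α * P {ω | R ω = r} := by
          -- rewrite the sum as a lintegral of a sum of indicators
          set ind : (Fin p × Fin p) → Ω → ENNReal :=
            fun q => (s r q).indicator (fun _ => (1 : ENNReal)) with hinddef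
          have hmeasind : ∀ q ∈ Pairs, Measurable (ind q) :=
            fun q _ => measurable_const.indicator (hsmeas r q)
          have hsum : (∑ q ∈ Pairs, P (s r q)) =
              ∫⁻ ω, (∑ q ∈ Pairs, ind q ω) ∂P := by
            rw [lintegral_finset_sum _ hmeasind]
            refine (Finset.sum_congr rfl fun q _ => ?_)
            rw [hinddef]
            rw [lintegral_indicator_const (hsmeas r q) 1, one_mul]
          have hfmeas : Measurable fun ω => ∑ q ∈ Pairs, ind q ω :=
            Finset.measurable_sum _ hmeasind
          rw [hsum, ← lintegral_mul_const c hfmeas]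
          have hpt : ∀ ω, (∑ q ∈ Pairs, ind q ω) * c ≤
              {ω | R ω = r}.indicator (fun _ => ENNReal.ofReal α) ω := by
            intro ω
            by_cases hω : R ω = r
            · have hcount : (∑ q ∈ Pairs, ind q ω) =
                  ((Pairs.filter (fun q => ω ∈ s r q)).card : ENNReal) := by
                simp only [hinddef, Set.indicator_apply]
                exact Finset.sum_boole _ _
              have hfilter : Pairs.filter (fun q => ω ∈ s r q) =
                  ((F ω) ×ˢ (F ω)).filter (fun q => q.1 < q.2) := by
                ext q
                simp only [hPairs, hs, Finset.mem_filter, Finset.mem_product,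
                  Finset.mem_univ, true_and, Set.mem_inter_iff, Set.mem_setOf_eq,
                  hFdef]
                constructor
                · rintro ⟨hlt, ⟨hj, hk⟩, _⟩
                  exact ⟨⟨hj, hk⟩, hlt⟩
                · rintro ⟨⟨hj, hk⟩, hlt⟩
                  exact ⟨hlt, ⟨hj, hk⟩, hω⟩
              have hFcard : (F ω).card = r := by rw [hFdef, ← hR, hω]
              have hN : 2 * (((F ω) ×ˢ (F ω)).filter (fun q => q.1 < q.2)).card ≤
                  r * (r - 1) := by
                have := two_mul_card_lt_pairs_le (F ω)
                rwa [hFcard] at this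
              set N : ℕ := (((F ω) ×ˢ (F ω)).filter (fun q => q.1 < q.2)).card
              have hind : {ω | R ω = r}.indicator (fun _ => ENNReal.ofReal α) ω =
                  ENNReal.ofReal α := by
                simp [Set.indicator_apply, hω]
              rw [hcount, hfilter, hind, hc]
              -- real-number inequality
              have hd : (0 : ℝ) < (r : ℝ) * ((r : ℝ) - 1) := by
                have : (2 : ℝ) ≤ (r : ℝ) := by exact_mod_cast hr2
                nlinarith
              have hNr : (2 * N : ℝ) ≤ (r : ℝ) * ((r : ℝ) - 1) := by
                have h1 : ((2 * N : ℕ) : ℝ) ≤ ((r * (r - 1) : ℕ) : ℝ) := by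
                  exact_mod_cast hN
                have h2 : ((r * (r - 1) : ℕ) : ℝ) = (r : ℝ) * ((r : ℝ) - 1) := by
                  have : (1 : ℕ) ≤ r := le_trans (by norm_num) hr2
                  push_cast [Nat.cast_sub this]
                  ring
                rw [h2] at h1
                exact_mod_cast h1
              have hreal : (N : ℝ) * (2 * α / ((r : ℝ) * ((r : ℝ) - 1))) ≤ α := by
                rw [mul_div_assoc', div_le_iff₀ hd]
                nlinarith [hα0, hNr]
              calc (N : ENNReal) * ENNReal.ofReal (2 * α / ((r : ℝ) * ((r : ℝ) - 1)))
                  = ENNReal.ofReal ((N : ℝ) * (2 * α / ((r : ℝ) * ((r : ℝ) - 1)))) := by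
                    rw [ENNReal.ofReal_mul (by positivity)]
                    congr 1
                    simp [ENNReal.ofReal_natCast]
                _ ≤ ENNReal.ofReal α := ENNReal.ofReal_le_ofReal hreal
            · have hzero : (∑ q ∈ Pairs, ind q ω) = 0 := by
                refine Finset.sum_eq_zero (fun q _ => ?_)
                have hns : ω ∉ s r q := by
                  rw [hs]
                  rintro ⟨-, h⟩
                  exact hω h
                simp [hinddef, Set.indicator_apply, hns]
              rw [hzero, zero_mul]
              exact zero_le
          calc (∫⁻ ω, (∑ q ∈ Pairs, ind q ω) * c ∂P)
              ≤ ∫⁻ ω, {ω | R ω = r}.indicator (fun _ => ENNReal.ofReal α) ω ∂P :=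
                lintegral_mono hpt
            _ = ENNReal.ofReal α * P {ω | R ω = r} :=
                lintegral_indicator_const (hm_le _ (hRm r)) _
  -- Step 4: sum up
  have hdisjR : (↑(Finset.Icc 2 p) : Set ℕ).PairwiseDisjoint
      (fun r => {ω | R ω = r}) := by
    intro r1 _ r2 _ hne
    refine Set.disjoint_left.mpr (fun ω h1 h2 => ?_)
    exact hne (h1.symm.trans h2)
  have hsumR : (∑ r ∈ Finset.Icc 2 p, P {ω | R ω = r}) ≤ 1 := by
    have heq := measure_biUnion_finset (μ := P) hdisjR (fun r _ => hm_le _ (hRm r))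
    calc (∑ r ∈ Finset.Icc 2 p, P {ω | R ω = r})
        = P (⋃ r ∈ Finset.Icc 2 p, {ω | R ω = r}) := heq.symm
      _ ≤ 1 := prob_le_one
  calc P (⋃ (j : Fin p) (k : Fin p) (_ : j < k),
        A j ∩ A k ∩ {ω | 2 ≤ R ω ∧ ω ∈ B j k (R ω)})
      ≤ P (⋃ r ∈ Finset.Icc 2 p, ⋃ q ∈ Pairs, (s r q ∩ B q.1 q.2 r)) :=
        measure_mono hsubset
    _ ≤ ∑ r ∈ Finset.Icc 2 p, P (⋃ q ∈ Pairs, (s r q ∩ B q.1 q.2 r)) :=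
        measure_biUnion_finset_le _ _
    _ ≤ ∑ r ∈ Finset.Icc 2 p, ∑ q ∈ Pairs, P (s r q ∩ B q.1 q.2 r) :=
        Finset.sum_le_sum (fun r _ => measure_biUnion_finset_le _ _)
    _ ≤ ∑ r ∈ Finset.Icc 2 p, ENNReal.ofReal α * P {ω | R ω = r} :=
        Finset.sum_le_sum hslice
    _ = ENNReal.ofReal α * ∑ r ∈ Finset.Icc 2 p, P {ω | R ω = r} :=
        (Finset.mul_sum _ _ _).symm
    _ ≤ ENNReal.ofReal α * 1 := mul_le_mul' le_rfl hsumR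
    _ = ENNReal.ofReal α := mul_one _
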